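/- Let H, R > 0 with H·R² ≤ π²/4, let K : (0, R] → ℝ be continuous with |K(x)| ≤ H for all x, and let h : (0, R] → ℝ be a differentiable solution of the Riccati equation h′(x) + h(x)² + K(x) = 0 with h(x) = 1/x + O(x) as x → 0⁺. Let κ ∈ ℝ with κ·R² < π² be such that cot_κ(R) = h(R). Then there exists x ∈ (0, R] with K(x) = κ. -/

import Mathlib

open Set Filter Topology
/-- `cot_K`: the solution of the constant-curvature Riccati equation. -/
noncomputable def cotK (K r : ℝ) : ℝ :=
  if K < 0 then Real.sqrt (-K) * (Real.cosh (Real.sqrt (-K) * r) / Real.sinh (Real.sqrt (-K) * r))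
  else if K = 0 then 1 / r
  else Real.sqrt K * (Real.cos (Real.sqrt K * r) / Real.sin (Real.sqrt K * r))


lemma exists_pos_right {R : ℝ} {v : ℝ → ℝ} {d x₀ : ℝ}
    (hx0 : 0 < x₀) (hxR : x₀ < R)
    (hv : HasDerivWithinAt v d (Ioc 0 R) x₀) (hv0 : v x₀ = 0) (hd : 0 < d) :
    ∃ t, x₀ < t ∧ t < R ∧ 0 < v t := by
  have hslope := hasDerivWithinAt_iff_tendsto_slope.1 hv
  have hsub : Ioo x₀ R ⊆ Ioc 0 R \ {x₀} := fun t ht =>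
    ⟨⟨hx0.trans ht.1, ht.2.le⟩, ne_of_gt ht.1⟩
  have hne : (𝓝[Ioo x₀ R] x₀).NeBot := left_nhdsWithin_Ioo_neBot hxR
  have h2 : Tendsto (slope v x₀) (𝓝[Ioo x₀ R] x₀) (𝓝 d) :=
    hslope.mono_left (nhdsWithin_mono _ hsub)
  have h3 : ∀ᶠ t in 𝓝[Ioo x₀ R] x₀, 0 < slope v x₀ t :=
    h2.eventually (eventually_gt_nhds hd)
  obtain ⟨t, hts, ht⟩ := (h3.and self_mem_nhdsWithin).exists
  refine ⟨t, ht.1, ht.2, ?_⟩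
  rw [slope_def_field, hv0, sub_zero, div_eq_mul_inv] at hts
  by_contra hcon
  push_neg at hcon
  have h1 : (0:ℝ) < (t - x₀)⁻¹ := inv_pos.2 (sub_pos.2 ht.1)
  nlinarith

lemma exists_neg_left_interval {R : ℝ} {v : ℝ → ℝ} {d : ℝ}
    (hR : 0 < R)
    (hv : HasDerivWithinAt v d (Ioc 0 R) R) (hv0 : v R = 0) (hd : 0 < d) :
    ∃ b, 0 ≤ b ∧ b < R ∧ ∀ t, b < t → t < R → v t < 0 := by
  have hslope := hasDerivWithinAt_iff_tendsto_slope.1 hv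
  have hsub : Ioo 0 R ⊆ Ioc 0 R \ {R} := fun t ht => ⟨⟨ht.1, ht.2.le⟩, ne_of_lt ht.2⟩
  have h2 : Tendsto (slope v R) (𝓝[Ioo 0 R] R) (𝓝 d) :=
    hslope.mono_left (nhdsWithin_mono _ hsub)
  have h3 : ∀ᶠ t in 𝓝[Ioo 0 R] R, 0 < slope v R t :=
    h2.eventually (eventually_gt_nhds hd)
  rw [eventually_nhdsWithin_iff] at h3
  obtain ⟨ε, hε, hball⟩ := Metric.eventually_nhds_iff_ball.1 h3
  refine ⟨max 0 (R - ε), le_max_left _ _, ?_, ?_⟩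
  · exact max_lt hR (by linarith)
  intro t ht htR
  have h0t : 0 < t := lt_of_le_of_lt (le_max_left _ _) ht
  have hmem : t ∈ Metric.ball R ε := by
    rw [Real.ball_eq_Ioo]; constructor
    · exact lt_of_le_of_lt (le_max_right _ _) ht
    · linarith
  have hst := hball t hmem ⟨h0t, htR⟩
  rw [slope_def_field, hv0, sub_zero] at hst
  have htR' : t - R < 0 := by linarith
  by_contra hcon
  push_neg at hcon
  have : v t / (t - R) ≤ 0 := div_nonpos_iff.2 (Or.inl ⟨hcon, htR'.le⟩)
  linarith

lemma riccati_compare {R a C : ℝ} (hR : 0 < R) (ha : 0 < a) (haR : a ≤ R) (hC : 0 < C)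
    (v v' p q : ℝ → ℝ)
    (hv : ∀ x ∈ Ioc (0:ℝ) R, HasDerivWithinAt v (v' x) (Ioc 0 R) x)
    (heqv : ∀ x ∈ Ioc (0:ℝ) R, v' x = -(p x) * v x + q x)
    (hq : ∀ x ∈ Ioc (0:ℝ) R, 0 < q x)
    (hp : ∀ x ∈ Ioc (0:ℝ) a, 0 ≤ p x)
    (hva : ∀ x ∈ Ioc (0:ℝ) a, |v x| ≤ C * x)
    (hvR : v R = 0) : False := by
  have hRmem : R ∈ Ioc (0:ℝ) R := ⟨hR, le_refl R⟩
  have hvc : ContinuousOn v (Ioc 0 R) := fun x hx => (hv x hx).continuousWithinAt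
  -- derivative at R is positive
  have hdR : 0 < v' R := by
    rw [heqv R hRmem, hvR]; simpa using hq R hRmem
  obtain ⟨b, hb0, hbR, hbneg⟩ := exists_neg_left_interval hR (hv R hRmem) hvR hdR
  -- Claim: v < 0 on Ioo 0 R
  have hneg : ∀ x ∈ Ioo (0:ℝ) R, v x < 0 := by
    by_contra hcon
    push_neg at hcon
    obtain ⟨x₁, hx₁, hvx₁⟩ := hcon
    set S := {x | x ∈ Ioo (0:ℝ) R ∧ 0 ≤ v x} with hS
    have hx₁S : x₁ ∈ S := ⟨hx₁, hvx₁⟩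
    have hSb : ∀ x ∈ S, x ≤ b := by
      intro x hx
      by_contra hxb
      push_neg at hxb
      exact absurd (hbneg x hxb hx.1.2) (not_lt.2 hx.2)
    have hSne : S.Nonempty := ⟨x₁, hx₁S⟩
    have hSbdd : BddAbove S := ⟨b, hSb⟩
    set x₂ := sSup S with hx₂def
    have hx₂b : x₂ ≤ b := csSup_le hSne hSb
    have hx₂R : x₂ < R := lt_of_le_of_lt hx₂b hbR
    have hx₂1 : x₁ ≤ x₂ := le_csSup hSbdd hx₁S
    have hx₂0 : 0 < x₂ := lt_of_lt_of_le hx₁.1 hx₂1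
    have hx₂mem : x₂ ∈ Ioc (0:ℝ) R := ⟨hx₂0, hx₂R.le⟩
    -- v x₂ ≥ 0 by continuity
    have hvx₂ : 0 ≤ v x₂ := by
      have hcl : x₂ ∈ closure S := csSup_mem_closure hSne hSbdd
      have hSsub : S ⊆ Ioc (0:ℝ) R := fun x hx => ⟨hx.1.1, hx.1.2.le⟩
      have hct : ContinuousWithinAt v S x₂ := (hvc x₂ hx₂mem).mono hSsub
      have hne : (𝓝[S] x₂).NeBot := mem_closure_iff_nhdsWithin_neBot.1 hcl
      exact ge_of_tendsto hct (eventually_nhdsWithin_of_forall (fun x hx => hx.2))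
    -- find a point of S above x₂: contradiction
    have hexceed : ∃ t, x₂ < t ∧ t < R ∧ 0 ≤ v t := by
      rcases eq_or_lt_of_le hvx₂ with heq0 | hlt0
      · -- v x₂ = 0: use derivative
        have hd : 0 < v' x₂ := by
          rw [heqv x₂ hx₂mem, ← heq0]; simpa using hq x₂ hx₂mem
        obtain ⟨t, ht1, ht2, ht3⟩ := exists_pos_right hx₂0 hx₂R (hv x₂ hx₂mem) heq0.symm hd
        exact ⟨t, ht1, ht2, ht3.le⟩
      · -- v x₂ > 0: use continuity
        have hct : ContinuousWithinAt v (Ioc 0 R) x₂ := hvc x₂ hx₂mem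
        have hev : ∀ᶠ t in 𝓝[Ioc 0 R] x₂, 0 < v t := hct.eventually (eventually_gt_nhds hlt0)
        have hmono : 𝓝[Ioo x₂ R] x₂ ≤ 𝓝[Ioc 0 R] x₂ :=
          nhdsWithin_mono _ (fun t ht => ⟨hx₂0.trans ht.1, ht.2.le⟩)
        have hne : (𝓝[Ioo x₂ R] x₂).NeBot := left_nhdsWithin_Ioo_neBot hx₂R
        obtain ⟨t, htpos, htmem⟩ := ((hev.filter_mono hmono).and self_mem_nhdsWithin).exists
        exact ⟨t, htmem.1, htmem.2, htpos.le⟩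
    obtain ⟨t, ht1, ht2, ht3⟩ := hexceed
    have : t ≤ x₂ := le_csSup hSbdd ⟨⟨hx₂0.trans ht1, ht2⟩, ht3⟩
    linarith
  -- Now v is strictly monotone on Ioc 0 a' where a' = min a (R/2)
  set a' := min a (R / 2) with ha'def
  have ha'0 : 0 < a' := lt_min ha (by linarith)
  have ha'R : a' < R := lt_of_le_of_lt (min_le_right _ _) (by linarith)
  have ha'a : a' ≤ a := min_le_left _ _
  have hsub : Ioc (0:ℝ) a' ⊆ Ioo 0 R := fun x hx => ⟨hx.1, lt_of_le_of_lt hx.2 ha'R⟩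
  have hmono : StrictMonoOn v (Ioc (0:ℝ) a') := by
    apply strictMonoOn_of_deriv_pos (convex_Ioc _ _)
    · exact hvc.mono (fun x hx => ⟨hx.1, (hsub hx).2.le⟩)
    · intro x hx
      rw [interior_Ioc] at hx
      have hxo : x ∈ Ioo (0:ℝ) R := ⟨hx.1, lt_of_lt_of_le hx.2 (le_of_lt ha'R)⟩
      have hxm : x ∈ Ioc (0:ℝ) R := ⟨hx.1, hxo.2.le⟩
      have hnb : Ioc (0:ℝ) R ∈ 𝓝 x := mem_nhds_iff.2 ⟨Ioo 0 R, fun t ht => ⟨ht.1, ht.2.le⟩, isOpen_Ioo, hxo⟩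
      have hda : HasDerivAt v (v' x) x := (hv x hxm).hasDerivAt hnb
      rw [hda.deriv, heqv x hxm]
      have h1 : 0 ≤ p x := hp x ⟨hx.1, hx.2.le.trans ha'a⟩
      have h2 : v x < 0 := hneg x hxo
      have h3 : 0 < q x := hq x hxm
      nlinarith
  -- contradiction with |v| ≤ C x near 0
  have hva' : v a' < 0 := hneg a' ⟨ha'0, ha'R⟩
  set t := min (a' / 2) (-v a' / (2 * C)) with htdef
  have ht0 : 0 < t := lt_min (by linarith) (div_pos (by linarith) (by linarith))
  have hta' : t < a' := lt_of_le_of_lt (min_le_left _ _) (by linarith)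
  have h1 : v t < v a' := hmono ⟨ht0, hta'.le⟩ ⟨ha'0, le_refl _⟩ hta'
  have h2 : |v t| ≤ C * t := hva t ⟨ht0, hta'.le.trans ha'a⟩
  have h3 : C * t ≤ C * (-v a' / (2 * C)) := by
    apply mul_le_mul_of_nonneg_left (min_le_right _ _) hC.le
  have h4 : C * (-v a' / (2 * C)) = -v a' / 2 := by field_simp
  have h5 : -(C * t) ≤ v t := neg_le_of_abs_le h2
  linarith

lemma nonneg_of_deriv (f f' : ℝ → ℝ) (h0 : f 0 = 0)
    (hd : ∀ t, HasDerivAt f (f' t) t) (hge : ∀ t, 0 ≤ t → 0 ≤ f' t) :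
    ∀ t, 0 ≤ t → 0 ≤ f t := by
  intro t ht
  have hmono : MonotoneOn f (Ici (0:ℝ)) := by
    apply monotoneOn_of_deriv_nonneg (convex_Ici 0)
    · exact fun x _ => (hd x).continuousAt.continuousWithinAt
    · intro x hx
      exact ((hd x).differentiableAt).differentiableWithinAt
    · intro x hx
      rw [interior_Ici] at hx
      rw [(hd x).deriv]
      exact hge x (le_of_lt hx)
  have := hmono (self_mem_Ici) (mem_Ici.2 ht) ht
  rwa [h0] at this

lemma sin_sub_mul_cos_nonneg {t : ℝ} (ht : 0 < t) (ht1 : t ≤ 1) :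
    t * Real.cos t ≤ Real.sin t := by
  have hπ : t < Real.pi / 2 := by
    have := Real.pi_gt_three; linarith
  have hcos : 0 < Real.cos t := Real.cos_pos_of_mem_Ioo ⟨by linarith, hπ⟩
  have htan := Real.lt_tan ht hπ
  rw [Real.tan_eq_sin_div_cos] at htan
  have : t * Real.cos t < Real.sin t / Real.cos t * Real.cos t :=
    mul_lt_mul_of_pos_right htan hcos
  rw [div_mul_cancel₀ _ (ne_of_gt hcos)] at this
  exact this.le

lemma sin_sub_mul_cos_le {t : ℝ} (ht : 0 ≤ t) :
    Real.sin t - t * Real.cos t ≤ t ^ 3 := by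
  have key := nonneg_of_deriv (fun t => t ^ 3 - Real.sin t + t * Real.cos t)
      (fun t => 3 * t ^ 2 - t * Real.sin t) (by norm_num)
      (fun t => by
        have h1 : HasDerivAt (fun t : ℝ => t ^ 3) (3 * t ^ 2) t := by
          simpa using hasDerivAt_pow 3 t
        have h2 : HasDerivAt Real.sin (Real.cos t) t := Real.hasDerivAt_sin t
        have h3 : HasDerivAt (fun t : ℝ => t * Real.cos t)
            (1 * Real.cos t + t * (-Real.sin t)) t :=
          (hasDerivAt_id t).mul (Real.hasDerivAt_cos t)
        have := (h1.sub h2).add h3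
        exact this.congr_deriv (by ring))
      (fun t ht => by
        show (0:ℝ) ≤ 3 * t ^ 2 - t * Real.sin t
        have h1 : Real.sin t ≤ t := Real.sin_le ht
        nlinarith)
  have := key t ht
  linarith

lemma mul_cosh_sub_sinh_nonneg {t : ℝ} (ht : 0 ≤ t) :
    Real.sinh t ≤ t * Real.cosh t := by
  have key := nonneg_of_deriv (fun t => t * Real.cosh t - Real.sinh t)
      (fun t => t * Real.sinh t) (by norm_num)
      (fun t => by
        have h1 : HasDerivAt (fun t : ℝ => t * Real.cosh t)
            (1 * Real.cosh t + t * Real.sinh t) t :=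
          (hasDerivAt_id t).mul (Real.hasDerivAt_cosh t)
        have := h1.sub (Real.hasDerivAt_sinh t)
        exact this.congr_deriv (by ring))
      (fun t ht => mul_nonneg ht (Real.sinh_nonneg_iff.2 ht))
  have := key t ht
  linarith

lemma mul_cosh_sub_sinh_le {t : ℝ} (ht : 0 ≤ t) :
    t * Real.cosh t - Real.sinh t ≤ t ^ 2 * Real.sinh t := by
  have key := nonneg_of_deriv
      (fun t => t ^ 2 * Real.sinh t + Real.sinh t - t * Real.cosh t)
      (fun t => t * Real.sinh t + t ^ 2 * Real.cosh t) (by norm_num)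
      (fun t => by
        have h1 : HasDerivAt (fun t : ℝ => t ^ 2 * Real.sinh t)
            (2 * t ^ 1 * Real.sinh t + t ^ 2 * Real.cosh t) t := by
          have h0 : HasDerivAt (fun x : ℝ => x ^ 2) (2 * t ^ 1) t := by
            simpa using hasDerivAt_pow 2 t
          exact h0.mul (Real.hasDerivAt_sinh t)
        have h2 : HasDerivAt (fun t : ℝ => t * Real.cosh t)
            (1 * Real.cosh t + t * Real.sinh t) t :=
          (hasDerivAt_id t).mul (Real.hasDerivAt_cosh t)
        have := (h1.add (Real.hasDerivAt_sinh t)).sub h2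
        exact this.congr_deriv (by ring))
      (fun t ht => by
        show (0:ℝ) ≤ t * Real.sinh t + t ^ 2 * Real.cosh t
        have h1 : 0 ≤ Real.sinh t := Real.sinh_nonneg_iff.2 ht
        have h2 : 0 < Real.cosh t := Real.cosh_pos t
        nlinarith)
  have := key t ht
  linarith

lemma cotK_neg_eq {κ : ℝ} (hκ : κ < 0) : cotK κ = fun r =>
    Real.sqrt (-κ) * (Real.cosh (Real.sqrt (-κ) * r) / Real.sinh (Real.sqrt (-κ) * r)) := by
  funext r; simp [cotK, hκ]

lemma cotK_zero_eq : cotK 0 = fun r => 1 / r := by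
  funext r; simp [cotK]

lemma cotK_pos_eq {κ : ℝ} (hκ : 0 < κ) : cotK κ = fun r =>
    Real.sqrt κ * (Real.cos (Real.sqrt κ * r) / Real.sin (Real.sqrt κ * r)) := by
  funext r; simp [cotK, not_lt.2 hκ.le, hκ.ne']

lemma cotK_hasDerivAt {κ R x : ℝ} (hκR : κ * R ^ 2 < Real.pi ^ 2) (hR : 0 < R)
    (hx : 0 < x) (hxR : x ≤ R) :
    HasDerivAt (cotK κ) (-((cotK κ x) ^ 2 + κ)) x := by
  rcases lt_trichotomy κ 0 with hκ | hκ | hκ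
  · set s := Real.sqrt (-κ) with hs
    have hs0 : 0 < s := Real.sqrt_pos.2 (by linarith)
    have hs2 : s ^ 2 = -κ := Real.sq_sqrt (by linarith)
    have hshp : 0 < Real.sinh (s * x) := Real.sinh_pos_iff.2 (mul_pos hs0 hx)
    have hlin : HasDerivAt (fun r : ℝ => s * r) s x := by
      simpa using (hasDerivAt_id x).const_mul s
    have hch : HasDerivAt (fun r : ℝ => Real.cosh (s * r)) (Real.sinh (s * x) * s) x :=
      (Real.hasDerivAt_cosh (s * x)).comp x hlin
    have hsh : HasDerivAt (fun r : ℝ => Real.sinh (s * r)) (Real.cosh (s * x) * s) x :=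
      (Real.hasDerivAt_sinh (s * x)).comp x hlin
    have hdiv := (hch.div hsh (ne_of_gt hshp)).const_mul s
    rw [cotK_neg_eq hκ]
    refine hdiv.congr_deriv ?_
    have hid : Real.cosh (s * x) ^ 2 = Real.sinh (s * x) ^ 2 + 1 := Real.cosh_sq _
    have hκe : κ = -s ^ 2 := by linarith
    rw [← hs, hκe]
    field_simp
    nlinarith [hid]
  · subst hκ
    rw [cotK_zero_eq]
    have h := hasDerivAt_inv (ne_of_gt hx)
    have he : -((1 / x) ^ 2 + (0:ℝ)) = -(x ^ 2)⁻¹ := by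
      rw [one_div, inv_pow]; ring
    simp only
    rw [he]
    simpa [one_div] using h
  · set s := Real.sqrt κ with hs
    have hs0 : 0 < s := Real.sqrt_pos.2 hκ
    have hs2 : s ^ 2 = κ := Real.sq_sqrt hκ.le
    have hsxπ : s * x < Real.pi := by
      have h1 : (s * R) ^ 2 < Real.pi ^ 2 := by
        rw [mul_pow, hs2]; exact hκR
      have h2 : 0 ≤ s * R := (mul_pos hs0 hR).le
      have h3 : s * R < Real.pi := by nlinarith [Real.pi_pos]
      have : s * x ≤ s * R := mul_le_mul_of_nonneg_left hxR hs0.le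
      linarith
    have hsnp : 0 < Real.sin (s * x) :=
      Real.sin_pos_of_pos_of_lt_pi (mul_pos hs0 hx) hsxπ
    have hlin : HasDerivAt (fun r : ℝ => s * r) s x := by
      simpa using (hasDerivAt_id x).const_mul s
    have hc : HasDerivAt (fun r : ℝ => Real.cos (s * r)) (-Real.sin (s * x) * s) x :=
      (Real.hasDerivAt_cos (s * x)).comp x hlin
    have hsn : HasDerivAt (fun r : ℝ => Real.sin (s * r)) (Real.cos (s * x) * s) x :=
      (Real.hasDerivAt_sin (s * x)).comp x hlin
    have hdiv := (hc.div hsn (ne_of_gt hsnp)).const_mul s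
    rw [cotK_pos_eq hκ]
    refine hdiv.congr_deriv ?_
    have hid : Real.sin (s * x) ^ 2 + Real.cos (s * x) ^ 2 = 1 := Real.sin_sq_add_cos_sq _
    have hκe : κ = s ^ 2 := hs2.symm
    rw [← hs, hκe]
    field_simp
    nlinarith [hid]

lemma cotK_near_zero (κ : ℝ) :
    ∃ M δ : ℝ, 0 < M ∧ 0 < δ ∧ ∀ x, 0 < x → x ≤ δ → |cotK κ x - 1 / x| ≤ M * x := by
  rcases lt_trichotomy κ 0 with hκ | hκ | hκ
  · set s := Real.sqrt (-κ) with hs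
    have hs0 : 0 < s := Real.sqrt_pos.2 (by linarith)
    have hs2 : s ^ 2 = -κ := Real.sq_sqrt (by linarith)
    refine ⟨s ^ 2, 1, by positivity, one_pos, fun x hx hx1 => ?_⟩
    rw [cotK_neg_eq hκ]
    have ht0 : 0 < s * x := mul_pos hs0 hx
    have hshp : 0 < Real.sinh (s * x) := Real.sinh_pos_iff.2 ht0
    have hA : s * (Real.cosh (s * x) / Real.sinh (s * x)) - 1 / x
        = (s * x * Real.cosh (s * x) - Real.sinh (s * x)) / (x * Real.sinh (s * x)) := by
      field_simp
    rw [hA]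
    have h1 : Real.sinh (s * x) ≤ s * x * Real.cosh (s * x) := mul_cosh_sub_sinh_nonneg ht0.le
    have h2 : s * x * Real.cosh (s * x) - Real.sinh (s * x) ≤ (s * x) ^ 2 * Real.sinh (s * x) :=
      mul_cosh_sub_sinh_le ht0.le
    have hden : 0 < x * Real.sinh (s * x) := mul_pos hx hshp
    rw [abs_of_nonneg (div_nonneg (by linarith) hden.le)]
    rw [div_le_iff₀ hden]
    nlinarith [hshp]
  · subst hκ
    refine ⟨1, 1, one_pos, one_pos, fun x hx _ => ?_⟩
    rw [cotK_zero_eq]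
    simp only [sub_self, abs_zero]
    positivity
  · set s := Real.sqrt κ with hs
    have hs0 : 0 < s := Real.sqrt_pos.2 hκ
    have hs2 : s ^ 2 = κ := Real.sq_sqrt hκ.le
    refine ⟨2 * s ^ 2, (s + 1)⁻¹, by positivity, by positivity, fun x hx hx1 => ?_⟩
    rw [cotK_pos_eq hκ]
    have ht0 : 0 < s * x := mul_pos hs0 hx
    have ht1 : s * x ≤ 1 := by
      have : s * x ≤ s * (s + 1)⁻¹ := mul_le_mul_of_nonneg_left hx1 hs0.le
      have h2 : s * (s + 1)⁻¹ ≤ 1 := by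
        rw [mul_inv_le_iff₀ (by linarith)]; linarith
      linarith
    have hsn : (s * x) / 2 ≤ Real.sin (s * x) := by
      have h := Real.sin_gt_sub_cube ht0
      have hcube : (s * x) ^ 3 ≤ s * x := by nlinarith [ht0, ht1, sq_nonneg (s * x)]
      linarith
    have hsnp : 0 < Real.sin (s * x) := lt_of_lt_of_le (by linarith) hsn
    have hA : s * (Real.cos (s * x) / Real.sin (s * x)) - 1 / x
        = (s * x * Real.cos (s * x) - Real.sin (s * x)) / (x * Real.sin (s * x)) := by
      field_simp
    rw [hA]
    have h1 : s * x * Real.cos (s * x) ≤ Real.sin (s * x) := sin_sub_mul_cos_nonneg ht0 ht1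
    have h2 : Real.sin (s * x) - s * x * Real.cos (s * x) ≤ (s * x) ^ 3 :=
      sin_sub_mul_cos_le ht0.le
    have hden : 0 < x * Real.sin (s * x) := mul_pos hx hsnp
    rw [abs_le]
    constructor
    · rw [le_div_iff₀ hden, neg_mul]
      have key : (s * x) ^ 3 ≤ 2 * s ^ 2 * x * (x * Real.sin (s * x)) := by
        have h3 : (2 * s ^ 2 * x * x) * ((s * x) / 2) ≤ (2 * s ^ 2 * x * x) * Real.sin (s * x) :=
          mul_le_mul_of_nonneg_left hsn (by positivity)
        nlinarith
      nlinarith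
    · have hle : (s * x * Real.cos (s * x) - Real.sin (s * x)) / (x * Real.sin (s * x)) ≤ 0 :=
        div_nonpos_iff.2 (Or.inr ⟨by linarith, hden.le⟩)
      have : (0:ℝ) ≤ 2 * s ^ 2 * x := by positivity
      linarith



/-- The intermediate-value property of the curvature along a radial geodesic
(Lemma 4.4 of the paper): if `cot_κ(R) = h(R)` then `K` attains the value `κ`
somewhere on `(0, R]`. -/
theorem curvature_ivt (H R : ℝ) (hH : 0 < H) (hR : 0 < R)
    (hHR : H * R ^ 2 ≤ Real.pi ^ 2 / 4)
    (K h h' : ℝ → ℝ)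
    (hKc : ContinuousOn K (Ioc 0 R))
    (hKb : ∀ x ∈ Ioc (0:ℝ) R, |K x| ≤ H)
    (hd : ∀ x ∈ Ioc (0:ℝ) R, HasDerivWithinAt h (h' x) (Ioc 0 R) x)
    (heq : ∀ x ∈ Ioc (0:ℝ) R, h' x + h x ^ 2 + K x = 0)
    (hinit : ∃ M δ : ℝ, 0 < M ∧ 0 < δ ∧ ∀ x : ℝ, 0 < x → x ≤ δ → |h x - 1 / x| ≤ M * x)
    (κ : ℝ) (hκ : κ * R ^ 2 < Real.pi ^ 2) (hκeq : cotK κ R = h R) :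
    ∃ x ∈ Ioc (0:ℝ) R, K x = κ := by
  -- derivative of g := cotK κ
  set g : ℝ → ℝ := cotK κ with hgdef
  have hg : ∀ x ∈ Ioc (0:ℝ) R, HasDerivAt g (-(g x ^ 2 + κ)) x := fun x hx =>
    cotK_hasDerivAt hκ hR hx.1 hx.2
  obtain ⟨M, δ, hM, hδ, hinit'⟩ := hinit
  obtain ⟨M', δ', hM', hδ', hg0⟩ := cotK_near_zero κ
  by_contra hcon
  push_neg at hcon
  -- dichotomy: K < κ everywhere or K > κ everywhere
  have dich : (∀ x ∈ Ioc (0:ℝ) R, K x < κ) ∨ (∀ x ∈ Ioc (0:ℝ) R, κ < K x) := by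
    by_contra hdi
    push_neg at hdi
    obtain ⟨⟨x₂, hx₂m, hx₂⟩, ⟨x₁, hx₁m, hx₁⟩⟩ := hdi
    have hx₂' : κ < K x₂ := lt_of_le_of_ne hx₂ (fun h => hcon x₂ hx₂m h.symm)
    have hx₁' : K x₁ < κ := lt_of_le_of_ne hx₁ (hcon x₁ hx₁m)
    have hsub : uIcc x₁ x₂ ⊆ Ioc (0:ℝ) R :=
      (ordConnected_Ioc).uIcc_subset hx₁m hx₂m
    have hmem : κ ∈ uIcc (K x₁) (K x₂) := by
      rw [mem_uIcc]; left; exact ⟨hx₁'.le, hx₂'.le⟩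
    obtain ⟨c, hc, hKc'⟩ := intermediate_value_uIcc (hKc.mono hsub) hmem
    exact hcon c (hsub hc) hKc'
  -- the common small radius
  set C : ℝ := M + M' + 1 with hCdef
  have hC : 0 < C := by positivity
  set a : ℝ := min (min δ δ') (min R (M + M' + 1)⁻¹) with hadef
  have ha : 0 < a := by
    apply lt_min (lt_min hδ hδ') (lt_min hR (by positivity))
  have haR : a ≤ R := le_trans (min_le_right _ _) (min_le_left _ _)
  have hbound : ∀ x ∈ Ioc (0:ℝ) a, |h x - 1 / x| ≤ M * x ∧ |g x - 1 / x| ≤ M' * x := by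
    intro x hx
    have h1 : x ≤ δ := le_trans hx.2 (le_trans (min_le_left _ _) (min_le_left _ _))
    have h2 : x ≤ δ' := le_trans hx.2 (le_trans (min_le_left _ _) (min_le_right _ _))
    exact ⟨hinit' x hx.1 h1, hg0 x hx.1 h2⟩
  have hpnn : ∀ x ∈ Ioc (0:ℝ) a, 0 ≤ h x + g x := by
    intro x hx
    obtain ⟨h1, h2⟩ := hbound x hx
    have hx0 : 0 < x := hx.1
    have hxs : x ≤ (M + M' + 1)⁻¹ :=
      le_trans hx.2 (le_trans (min_le_right _ _) (min_le_right _ _))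
    have e1 : 1 / x - M * x ≤ h x := by
      have := neg_le_of_abs_le h1; linarith
    have e2 : 1 / x - M' * x ≤ g x := by
      have := neg_le_of_abs_le h2; linarith
    have hpos : (0:ℝ) < M + M' + 1 := by positivity
    have h3 : (M + M' + 1) * x ≤ 1 := by
      calc (M + M' + 1) * x ≤ (M + M' + 1) * (M + M' + 1)⁻¹ :=
            mul_le_mul_of_nonneg_left hxs hpos.le
        _ = 1 := mul_inv_cancel₀ (ne_of_gt hpos)
    have hx1 : x ≤ 1 := by nlinarith
    have hxx : (M + M') * (x * x) ≤ 2 := by nlinarith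
    have h1x : (M + M') * x ≤ 2 / x := by
      rw [le_div_iff₀ hx0]; nlinarith
    have : 1 / x - M * x + (1 / x - M' * x) = 2 / x - (M + M') * x := by ring
    linarith
  have hvbound : ∀ x ∈ Ioc (0:ℝ) a, |h x - g x| ≤ C * x := by
    intro x hx
    obtain ⟨h1, h2⟩ := hbound x hx
    have : |h x - g x| ≤ |h x - 1 / x| + |g x - 1 / x| := by
      have := abs_sub (h x - 1/x) (g x - 1/x)
      calc |h x - g x| = |(h x - 1/x) - (g x - 1/x)| := by ring_nf
        _ ≤ |h x - 1/x| + |g x - 1/x| := abs_sub _ _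
    have hx0 : 0 < x := hx.1
    nlinarith
  have hgR : g R = h R := hκeq
  rcases dich with hlt | hgt
  · -- K < κ: compare with v = h - g
    refine riccati_compare hR ha haR hC (fun x => h x - g x)
      (fun x => h' x + (g x ^ 2 + κ)) (fun x => h x + g x) (fun x => κ - K x)
      ?_ ?_ ?_ ?_ ?_ ?_
    · intro x hx
      have := (hd x hx).sub ((hg x hx).hasDerivWithinAt)
      exact this.congr_deriv (by ring)
    · intro x hx
      have hh : h' x = -(h x ^ 2) - K x := by linarith [heq x hx]
      rw [hh]; ring
    · intro x hx; linarith [hlt x hx]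
    · exact hpnn
    · exact hvbound
    · rw [hgR]; ring
  · -- K > κ: compare with v = g - h
    refine riccati_compare hR ha haR hC (fun x => g x - h x)
      (fun x => -(g x ^ 2 + κ) - h' x) (fun x => h x + g x) (fun x => K x - κ)
      ?_ ?_ ?_ ?_ ?_ ?_
    · intro x hx
      exact ((hg x hx).hasDerivWithinAt).sub (hd x hx)
    · intro x hx
      have hh : h' x = -(h x ^ 2) - K x := by linarith [heq x hx]
      rw [hh]; ring
    · intro x hx; linarith [hgt x hx]
    · exact hpnn
    · intro x hx
      rw [abs_sub_comm]; exact hvbound x hx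
    · rw [hgR]; ring
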